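/- Let n ≥ 1 and let w : (0,∞) → ℝ be a C¹-smooth increasing function such that the measure ν on ℝⁿ with density x ↦ e^{−w(|x|)} is finite. Then for every θ ∈ ℝⁿ, the function h(x) = ⟨x, θ⟩ satisfies ∫ (w'(|x|)/|x|) h(x)² dν(x) = ∫ |∇h(x)|² dν(x), i.e. ∫ (w'(|x|)/|x|) ⟨x,θ⟩² e^{−w(|x|)} dx = |θ|² ∫ e^{−w(|x|)} dx. -/

import Mathlib

open MeasureTheory Set
open scoped ENNReal RealInnerProductSpace

set_option maxHeartbeats 1000000

open Filter intervalIntegral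
open scoped Topology

noncomputable section Stmt14Aux


/-- Sign flip of one coordinate in Euclidean space, as a linear isometry equivalence. -/
def flipCoord (n : ℕ) (i : Fin n) :
    EuclideanSpace ℝ (Fin n) ≃ₗᵢ[ℝ] EuclideanSpace ℝ (Fin n) where
  toLinearEquiv := LinearEquiv.ofInvolutive
    { toFun := fun x => WithLp.toLp 2 (fun j => if j = i then -x j else x j)
      map_add' := by
        intro x y; ext j
        by_cases h : j = i <;> simp [h] <;> ring
      map_smul' := by
        intro c x; ext j
        by_cases h : j = i <;> simp [h] <;> ring }
    (by intro x; ext j; by_cases h : j = i <;> simp [h])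
  norm_map' := by
    intro x
    rw [EuclideanSpace.norm_eq, EuclideanSpace.norm_eq]
    congr 1
    refine Finset.sum_congr rfl fun j _ => ?_
    by_cases h : j = i <;> simp [h, LinearEquiv.ofInvolutive]

lemma flipCoord_apply (n : ℕ) (i j : Fin n) (x : EuclideanSpace ℝ (Fin n)) :
    flipCoord n i x j = if j = i then -x j else x j := rfl



variable {n : ℕ} {w : ℝ → ℝ}

lemma oneD (hn : 1 ≤ n)
    (hD : ∀ r ∈ Ioi (0:ℝ), HasDerivAt w (deriv w r) r)
    (hC : ContinuousOn (deriv w) (Ioi 0))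
    (hpos : ∀ r ∈ Ioi (0:ℝ), 0 ≤ deriv w r)
    (hanti : AntitoneOn (fun r => Real.exp (-w r)) (Ioi 0))
    (hint : IntegrableOn (fun r => r^(n-1) * Real.exp (-w r)) (Ioi 0)) :
    IntegrableOn (fun r => r^n * deriv w r * Real.exp (-w r)) (Ioi 0) ∧
    ∫ r in Ioi (0:ℝ), r^n * deriv w r * Real.exp (-w r) =
      n * ∫ r in Ioi (0:ℝ), r^(n-1) * Real.exp (-w r) := by
  set φ : ℝ → ℝ := fun r => Real.exp (-w r) with hφ
  set h1 : ℝ → ℝ := fun r => r^(n-1) * φ r with hh1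
  set h2 : ℝ → ℝ := fun r => r^n * deriv w r * φ r with hh2
  set H : ℝ → ℝ := fun r => r^n * φ r with hH
  set B : ℝ := ∫ r in Ioi (0:ℝ), h1 r with hB
  have hncast : ((n - 1 : ℕ) : ℝ) + 1 = (n : ℝ) := by
    have : (n - 1) + 1 = n := Nat.sub_add_cancel hn
    exact_mod_cast congrArg (Nat.cast (R := ℝ)) this
  have hφc : ContinuousOn φ (Ioi 0) := fun r hr =>
    (Real.continuous_exp.continuousAt.comp (hD r hr).continuousAt.neg).continuousWithinAt
  have hφpos : ∀ r : ℝ, 0 < φ r := fun r => Real.exp_pos _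
  have hh1c : ContinuousOn h1 (Ioi 0) := (continuous_pow (n-1)).continuousOn.mul hφc
  have hh2c : ContinuousOn h2 (Ioi 0) :=
    ((continuous_pow n).continuousOn.mul hC).mul hφc
  have hh1nn : ∀ r ∈ Ioi (0:ℝ), 0 ≤ h1 r := fun r hr =>
    mul_nonneg (pow_nonneg (le_of_lt hr) _) (hφpos r).le
  have hh2nn : ∀ r ∈ Ioi (0:ℝ), 0 ≤ h2 r := fun r hr =>
    mul_nonneg (mul_nonneg (pow_nonneg (le_of_lt hr) _) (hpos r hr)) (hφpos r).le
  -- interval integrability of h1, h2 on subintervals of (0, ∞)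
  have hsubIcc : ∀ a b : ℝ, 0 < a → Icc a b ⊆ Ioi 0 := fun a b ha x hx => lt_of_lt_of_le ha hx.1
  have hii1 : ∀ a b : ℝ, 0 < a → a ≤ b → IntervalIntegrable h1 volume a b := fun a b ha hab =>
    (hh1c.mono (by rw [uIcc_of_le hab]; exact hsubIcc a b ha)).intervalIntegrable
  have hii2 : ∀ a b : ℝ, 0 < a → a ≤ b → IntervalIntegrable h2 volume a b := fun a b ha hab =>
    (hh2c.mono (by rw [uIcc_of_le hab]; exact hsubIcc a b ha)).intervalIntegrable
  have hii1' : ∀ b : ℝ, 0 < b → IntervalIntegrable h1 volume 0 b := by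
    intro b hb
    rw [intervalIntegrable_iff_integrableOn_Ioc_of_le hb.le]
    exact hint.mono_set Ioc_subset_Ioi_self
  -- integration by parts on [a,b]
  have ibp : ∀ a b : ℝ, 0 < a → a ≤ b →
      ∫ r in a..b, h2 r = n * (∫ r in a..b, h1 r) + H a - H b := by
    intro a b ha hab
    have hsub : uIcc a b ⊆ Ioi 0 := by rw [uIcc_of_le hab]; exact hsubIcc a b ha
    have hder : ∀ r ∈ uIcc a b, HasDerivAt H (n * h1 r - h2 r) r := by
      intro r hr
      have hr' : r ∈ Ioi (0:ℝ) := hsub hr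
      have h1d : HasDerivAt (fun s : ℝ => s ^ n) ((n:ℝ) * r ^ (n-1)) r := by
        simpa using hasDerivAt_pow n r
      have h2d : HasDerivAt φ (φ r * -(deriv w r)) r := (hD r hr').neg.exp
      have : HasDerivAt H _ r := h1d.mul h2d
      convert this using 1
      show (n:ℝ) * (r^(n-1) * φ r) - r^n * deriv w r * φ r
        = (n:ℝ) * r^(n-1) * φ r + r^n * (φ r * -(deriv w r))
      ring
    have hci : IntervalIntegrable (fun r => n * h1 r - h2 r) volume a b :=
      (((hii1 a b ha hab).const_mul _).sub (hii2 a b ha hab))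
    have key := integral_eq_sub_of_hasDerivAt hder hci
    have h1i := (hii1 a b ha hab)
    have h2i := (hii2 a b ha hab)
    have hsplit : ∫ r in a..b, (n * h1 r - h2 r) =
        n * (∫ r in a..b, h1 r) - ∫ r in a..b, h2 r := by
      rw [intervalIntegral.integral_sub (h1i.const_mul _) h2i,
        intervalIntegral.integral_const_mul]
    rw [hsplit] at key
    linarith
  -- tendsto of ∫ 0..s h1 to B at top
  have hBtop : Tendsto (fun s => ∫ r in (0:ℝ)..s, h1 r) atTop (𝓝 B) :=
    intervalIntegral_tendsto_integral_Ioi 0 hint tendsto_id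
  -- tail integral of h1 tends to 0
  have hT : Tendsto (fun s => ∫ r in Ioi s, h1 r) atTop (𝓝 0) := by
    have hev : (fun s => ∫ r in Ioi s, h1 r) =ᶠ[atTop] fun s => B - ∫ r in (0:ℝ)..s, h1 r := by
      filter_upwards [eventually_gt_atTop (0:ℝ)] with s hs
      have hdisj : Disjoint (Ioc (0:ℝ) s) (Ioi s) := fun u hu1 hu2 x hx =>
        absurd ((hu1 hx).2) (not_le.mpr (hu2 hx))
      have hunion : Ioc (0:ℝ) s ∪ Ioi s = Ioi 0 := Ioc_union_Ioi_eq_Ioi hs.le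
      have := setIntegral_union hdisj measurableSet_Ioi
        (hint.mono_set Ioc_subset_Ioi_self) (hint.mono_set (Ioi_subset_Ioi hs.le))
      rw [hunion] at this
      rw [intervalIntegral.integral_of_le hs.le]
      rw [hB, this]; ring
    refine Tendsto.congr' hev.symm ?_
    have := (tendsto_const_nhds (x := B) (f := atTop (α := ℝ))).sub hBtop
    simpa using this
  -- H tends to 0 at +∞
  have hHtop : Tendsto H atTop (𝓝 0) := by
    have hc : (0:ℝ) < 1 - (1/2)^n := by
      have : ((1:ℝ)/2)^n < 1 := pow_lt_one₀ (by norm_num) (by norm_num) (by omega)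
      linarith
    have hbound : ∀ b : ℝ, 0 < b → H b * ((1 - (1/2)^n) / n) ≤ ∫ r in Ioi (b/2), h1 r := by
      intro b hb
      have hb2 : 0 < b/2 := by linarith
      have hle : b/2 ≤ b := by linarith
      have hcalc : H b * ((1 - (1/2)^n) / n) = ∫ r in (b/2)..b, r^(n-1) * φ b := by
        rw [intervalIntegral.integral_mul_const, integral_pow, Nat.sub_add_cancel hn, hncast]
        have hn0 : (n:ℝ) ≠ 0 := Nat.cast_ne_zero.mpr (by omega)
        have hhalf : (b/2)^n = b^n * (1/2)^n := by
          rw [div_eq_mul_one_div b 2, mul_pow]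
        rw [hhalf, hH]
        field_simp
      have hmono : ∫ r in (b/2)..b, r^(n-1) * φ b ≤ ∫ r in (b/2)..b, h1 r := by
        rw [intervalIntegral.integral_of_le hle, intervalIntegral.integral_of_le hle]
        refine setIntegral_mono_on ?_ ?_ measurableSet_Ioc ?_
        · exact ((continuous_pow (n-1)).mul continuous_const).integrableOn_Ioc
        · exact (hii1 _ _ hb2 hle).1
        · intro r hr
          have hr0 : r ∈ Ioi (0:ℝ) := lt_of_lt_of_le hb2 hr.1.le
          have : φ b ≤ φ r := hanti hr0 (by exact hb) hr.2
          exact mul_le_mul_of_nonneg_left this (pow_nonneg hr0.le _)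
      have htail : ∫ r in (b/2)..b, h1 r ≤ ∫ r in Ioi (b/2), h1 r := by
        rw [intervalIntegral.integral_of_le hle]
        refine setIntegral_mono_set (hint.mono_set (Ioi_subset_Ioi hb2.le)) ?_ ?_
        · filter_upwards [ae_restrict_mem measurableSet_Ioi] with r hr
          exact hh1nn r (lt_trans hb2 hr)
        · exact HasSubset.Subset.eventuallyLE Ioc_subset_Ioi_self
      calc H b * ((1 - (1/2)^n) / n) = ∫ r in (b/2)..b, r^(n-1) * φ b := hcalc
        _ ≤ ∫ r in (b/2)..b, h1 r := hmono
        _ ≤ ∫ r in Ioi (b/2), h1 r := htail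
    have hcn : (0:ℝ) < (1 - (1/2)^n) / n := by
      apply div_pos hc; exact_mod_cast Nat.pos_of_ne_zero (by omega)
    have hsq : Tendsto (fun b => H b * ((1 - (1/2)^n) / n)) atTop (𝓝 0) := by
      apply squeeze_zero'
      · filter_upwards [eventually_gt_atTop (0:ℝ)] with b hb
        exact mul_nonneg (mul_nonneg (pow_nonneg hb.le _) (hφpos b).le) hcn.le
      · filter_upwards [eventually_gt_atTop (0:ℝ)] with b hb
        exact hbound b hb
      · exact hT.comp (tendsto_id.atTop_div_const (by norm_num))
    have h2t := hsq.mul_const ((((1:ℝ) - (1/2)^n) / (n:ℝ))⁻¹)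
    rw [zero_mul] at h2t
    refine h2t.congr fun b => ?_
    rw [mul_inv_cancel_right₀ hcn.ne']
  -- primitive of h1 tends to 0 at 0+
  have hP0 : Tendsto (fun a => ∫ r in (0:ℝ)..a, h1 r) (𝓝[>] 0) (𝓝 0) := by
    have hint01 : IntegrableOn h1 (uIcc (0:ℝ) 1) := by
      rw [uIcc_of_le zero_le_one, integrableOn_Icc_iff_integrableOn_Ioc]
      exact hint.mono_set Ioc_subset_Ioi_self
    have hcont := intervalIntegral.continuousOn_primitive_interval hint01
    have h0m : (0:ℝ) ∈ uIcc (0:ℝ) 1 := by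
      rw [uIcc_of_le zero_le_one]; exact ⟨le_refl _, zero_le_one⟩
    have := (hcont 0 h0m).tendsto
    rw [intervalIntegral.integral_same] at this
    have hle : 𝓝[>] (0:ℝ) ≤ 𝓝[uIcc (0:ℝ) 1] 0 := by
      rw [uIcc_of_le zero_le_one]
      refine le_trans ?_ (nhdsWithin_mono _ (Ioc_subset_Icc_self : Ioc (0:ℝ) 1 ⊆ _))
      rw [← nhdsWithin_inter_of_mem (t := Ioi (0:ℝ)) (s := Iic 1)
        (mem_nhdsWithin_of_mem_nhds (Iic_mem_nhds one_pos))]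
      apply nhdsWithin_mono
      intro x hx; exact ⟨hx.2, hx.1⟩
    exact this.mono_left hle
  -- H tends to 0 at 0+
  have hH0 : Tendsto H (𝓝[>] 0) (𝓝 0) := by
    have hbound : ∀ a : ℝ, 0 < a → H a ≤ n * ∫ r in (0:ℝ)..a, h1 r := by
      intro a ha
      have hcalc : H a = n * ∫ r in (0:ℝ)..a, r^(n-1) * φ a := by
        rw [intervalIntegral.integral_mul_const, integral_pow, Nat.sub_add_cancel hn, hncast,
          zero_pow (n := n) (by omega), hH]
        have hn0 : (n:ℝ) ≠ 0 := Nat.cast_ne_zero.mpr (by omega)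
        field_simp
        ring
      have hmono : ∫ r in (0:ℝ)..a, r^(n-1) * φ a ≤ ∫ r in (0:ℝ)..a, h1 r := by
        rw [intervalIntegral.integral_of_le ha.le, intervalIntegral.integral_of_le ha.le]
        refine setIntegral_mono_on ?_ ?_ measurableSet_Ioc ?_
        · exact ((continuous_pow (n-1)).mul continuous_const).integrableOn_Ioc
        · exact (intervalIntegrable_iff_integrableOn_Ioc_of_le ha.le).mp (hii1' a ha)
        · intro r hr
          have : φ a ≤ φ r := hanti hr.1 (by exact ha) hr.2
          exact mul_le_mul_of_nonneg_left this (pow_nonneg hr.1.le _)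
      calc H a = n * ∫ r in (0:ℝ)..a, r^(n-1) * φ a := hcalc
        _ ≤ n * ∫ r in (0:ℝ)..a, h1 r := by
            apply mul_le_mul_of_nonneg_left hmono
            exact_mod_cast Nat.zero_le n
    apply squeeze_zero'
    · filter_upwards [self_mem_nhdsWithin] with a ha
      exact mul_nonneg (pow_nonneg (le_of_lt ha) _) (hφpos a).le
    · filter_upwards [self_mem_nhdsWithin] with a ha
      exact hbound a ha
    · have := hP0.const_mul (n:ℝ)
      simpa using this
  -- the exhausting cover of (0, ∞)
  set u : ℕ → ℝ := fun k => ((k:ℝ)+1)⁻¹ with hu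
  set v : ℕ → ℝ := fun k => (k:ℝ)+1 with hv
  have hupos : ∀ k, 0 < u k := fun k => by positivity
  have hvone : ∀ k, 1 ≤ v k := fun k => by
    simp only [hv, le_add_iff_nonneg_left]; positivity
  have huv : ∀ k, u k ≤ v k := by
    intro k
    calc u k ≤ 1 := by
          rw [hu]
          exact inv_le_one_of_one_le₀ (hvone k)
      _ ≤ v k := hvone k
  have hut : Tendsto u atTop (𝓝[>] 0) := by
    apply tendsto_nhdsWithin_of_tendsto_nhds_of_eventually_within
    · exact (tendsto_atTop_add_const_right _ 1 tendsto_natCast_atTop_atTop).inv_tendsto_atTop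
    · exact Eventually.of_forall fun k => hupos k
  have hvt : Tendsto v atTop atTop :=
    tendsto_atTop_add_const_right _ 1 tendsto_natCast_atTop_atTop
  have cover : AECover (volume.restrict (Ioi (0:ℝ))) atTop (fun k => Ioc (u k) (v k)) := by
    constructor
    · filter_upwards [ae_restrict_mem measurableSet_Ioi] with x hx
      have hl1 : ∀ᶠ k in atTop, u k < x :=
        (hut.mono_right nhdsWithin_le_nhds).eventually_lt_const hx
      have hl2 : ∀ᶠ k in atTop, x ≤ v k := hvt.eventually_ge_atTop x
      filter_upwards [hl1, hl2] with k hk1 hk2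
      exact ⟨hk1, hk2⟩
    · exact fun k => measurableSet_Ioc
  have hres : ∀ s : Set ℝ, s ⊆ Ioi (0:ℝ) → MeasurableSet s →
      (volume.restrict (Ioi (0:ℝ))).restrict s = volume.restrict s := by
    intro s hs hms
    rw [Measure.restrict_restrict hms, inter_eq_left.mpr hs]
  have hIocsub : ∀ k, Ioc (u k) (v k) ⊆ Ioi (0:ℝ) :=
    fun k x hx => lt_trans (hupos k) hx.1
  have hIioc : ∀ k, IntegrableOn h2 (Ioc (u k) (v k)) (volume.restrict (Ioi 0)) := by
    intro k
    unfold IntegrableOn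
    rw [hres _ (hIocsub k) measurableSet_Ioc]
    exact (intervalIntegrable_iff_integrableOn_Ioc_of_le (huv k)).mp
      (hii2 _ _ (hupos k) (huv k))
  have hnng : ∀ᵐ x ∂(volume.restrict (Ioi (0:ℝ))), 0 ≤ h2 x := by
    filter_upwards [ae_restrict_mem measurableSet_Ioi] with x hx
    exact hh2nn x hx
  have htendI : Tendsto (fun k => ∫ r in Ioc (u k) (v k), h2 r ∂(volume.restrict (Ioi 0)))
      atTop (𝓝 ((n:ℝ) * B)) := by
    have heq : ∀ k, ∫ r in Ioc (u k) (v k), h2 r ∂(volume.restrict (Ioi 0)) =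
        (n:ℝ) * (∫ r in (0:ℝ)..(v k), h1 r) - n * (∫ r in (0:ℝ)..(u k), h1 r)
          + H (u k) - H (v k) := by
      intro k
      rw [show (volume.restrict (Ioi (0:ℝ))).restrict (Ioc (u k) (v k))
            = volume.restrict (Ioc (u k) (v k)) from hres _ (hIocsub k) measurableSet_Ioc]
      rw [← intervalIntegral.integral_of_le (huv k), ibp _ _ (hupos k) (huv k)]
      have hsub := integral_interval_sub_left
        (hii1' (v k) (lt_of_lt_of_le one_pos (hvone k)))
        (hii1' (u k) (hupos k))
      rw [← hsub]; ring
    have l1 : Tendsto (fun k => ∫ r in (0:ℝ)..(v k), h1 r) atTop (𝓝 B) := hBtop.comp hvt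
    have l2 : Tendsto (fun k => ∫ r in (0:ℝ)..(u k), h1 r) atTop (𝓝 0) := hP0.comp hut
    have l3 : Tendsto (fun k => H (u k)) atTop (𝓝 0) := hH0.comp hut
    have l4 : Tendsto (fun k => H (v k)) atTop (𝓝 0) := hHtop.comp hvt
    have hcomb := (((l1.const_mul (n:ℝ)).sub (l2.const_mul (n:ℝ))).add l3).sub l4
    refine Tendsto.congr (fun k => (heq k).symm) ?_
    simpa using hcomb
  have hint2 : IntegrableOn h2 (Ioi 0) :=
    cover.integrable_of_integral_tendsto_of_nonneg_ae _ hIioc hnng htendI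
  have hval : ∫ r in Ioi (0:ℝ), h2 r = (n:ℝ) * B :=
    cover.integral_eq_of_tendsto _ hint2 htendI
  exact ⟨hint2, hval⟩


lemma lpolar {n : ℕ} (hn : 1 ≤ n) {f : ℝ → ℝ≥0∞} (hf : Measurable f) :
    ∫⁻ x : EuclideanSpace ℝ (Fin n), f ‖x‖ =
      (volume : Measure (EuclideanSpace ℝ (Fin n))).toSphere univ *
        ∫⁻ r in Ioi (0:ℝ), ENNReal.ofReal (r ^ (n-1)) * f r := by
  set E := EuclideanSpace ℝ (Fin n)
  haveI : Nontrivial E := by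
    have hdim : Module.finrank ℝ E = n := finrank_euclideanSpace_fin
    apply Module.nontrivial_of_finrank_pos (R := ℝ)
    rw [hdim]; omega
  set μ : Measure E := volume with hμ
  have hdim : Module.finrank ℝ E = n := finrank_euclideanSpace_fin
  calc ∫⁻ x : E, f ‖x‖ ∂μ
      = ∫⁻ x in ({0}ᶜ : Set E), f ‖x‖ ∂μ := by rw [restrict_compl_singleton]
    _ = ∫⁻ x : ({0}ᶜ : Set E), f ‖(x : E)‖ ∂(μ.comap Subtype.val) :=
        (lintegral_subtype_comap (measurableSet_singleton _).compl _).symm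
    _ = ∫⁻ p : Metric.sphere (0:E) 1 × Ioi (0:ℝ), f p.2
          ∂(μ.toSphere.prod (Measure.volumeIoiPow (Module.finrank ℝ E - 1))) :=
        by refine Eq.trans ?_ (μ.measurePreserving_homeomorphUnitSphereProd.lintegral_comp_emb
          (Homeomorph.measurableEmbedding _) (fun p => f p.2)); simp only [homeomorphUnitSphereProd_apply_snd_coe]
    _ = μ.toSphere univ * ∫⁻ r : Ioi (0:ℝ), f r ∂(Measure.volumeIoiPow (n - 1)) := by
        rw [hdim, MeasureTheory.lintegral_prod (fun p : ↑(Metric.sphere (0:E) 1) × ↑(Ioi (0:ℝ)) => f ↑p.2)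
          ((show Measurable fun p : Metric.sphere (0:E) 1 × Ioi (0:ℝ) => f p.2 from
            hf.comp (measurable_subtype_coe.comp measurable_snd)).aemeasurable)]
        simp [lintegral_const, mul_comm]
    _ = μ.toSphere univ * ∫⁻ r in Ioi (0:ℝ), ENNReal.ofReal (r ^ (n-1)) * f r := by
        congr 1
        rw [Measure.volumeIoiPow, lintegral_withDensity_eq_lintegral_mul _
          ((measurable_subtype_coe.pow_const _).ennreal_ofReal)
          (show Measurable fun r : (Ioi (0:ℝ)) => f r from hf.comp measurable_subtype_coe)]
        exact lintegral_subtype_comap measurableSet_Ioi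
          (fun r => ENNReal.ofReal (r ^ (n-1)) * f r)

end Stmt14Aux



theorem statement14 (n : ℕ) (hn : 1 ≤ n) (w : ℝ → ℝ)
    (hw_smooth : ContDiffOn ℝ 1 w (Set.Ioi (0 : ℝ)))
    (hw_mono : MonotoneOn w (Set.Ioi (0 : ℝ)))
    (hfin : IsFiniteMeasure
      ((volume : Measure (EuclideanSpace ℝ (Fin n))).withDensity
        (fun x => ENNReal.ofReal (Real.exp (-w ‖x‖)))))
    (θ : EuclideanSpace ℝ (Fin n)) :
    ∫ x : EuclideanSpace ℝ (Fin n),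
        (deriv w ‖x‖ / ‖x‖) * ⟪x, θ⟫ ^ 2 * Real.exp (-w ‖x‖) =
      ‖θ‖ ^ 2 * ∫ x : EuclideanSpace ℝ (Fin n), Real.exp (-w ‖x‖) := by
  classical
  haveI hNT : Nontrivial (EuclideanSpace ℝ (Fin n)) := by
    apply Module.nontrivial_of_finrank_pos (R := ℝ)
    rw [finrank_euclideanSpace_fin]; omega
  set i0 : Fin n := ⟨0, hn⟩ with hi0
  -- measurable modification of w
  set wt : ℝ → ℝ := (Ioi (0:ℝ)).piecewise w (fun _ => 0) with hwt_def
  have hwt_meas : Measurable wt :=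
    ContinuousOn.measurable_piecewise hw_smooth.continuousOn continuousOn_const measurableSet_Ioi
  have hwt_eq : ∀ r : ℝ, 0 < r → wt r = w r := fun r hr => piecewise_eq_of_mem _ _ _ hr
  -- derivative facts
  have hD : ∀ r ∈ Ioi (0:ℝ), HasDerivAt w (deriv w r) r := fun r hr =>
    (((hw_smooth.differentiableOn one_ne_zero).differentiableAt
      (isOpen_Ioi.mem_nhds hr))).hasDerivAt
  have hC : ContinuousOn (deriv w) (Ioi 0) :=
    (hw_smooth.continuousOn_derivWithin isOpen_Ioi.uniqueDiffOn le_rfl).congr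
      fun r hr => (derivWithin_of_isOpen isOpen_Ioi hr).symm
  have hpos : ∀ r ∈ Ioi (0:ℝ), 0 ≤ deriv w r := by
    intro r hr
    have hslope := hasDerivAt_iff_tendsto_slope.mp (hD r hr)
    have h2 : Tendsto (slope w r) (𝓝[>] r) (𝓝 (deriv w r)) :=
      hslope.mono_left (nhdsWithin_mono _ fun y hy => ne_of_gt hy)
    refine ge_of_tendsto h2 ?_
    filter_upwards [self_mem_nhdsWithin] with y hy
    have hy' : r < y := hy
    rw [slope_def_field]
    apply div_nonneg ?_ (by linarith)
    have := hw_mono hr (lt_trans hr hy' : (0:ℝ) < y) hy'.le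
    linarith
  have hanti : AntitoneOn (fun r => Real.exp (-w r)) (Ioi 0) := fun a ha b hb hab =>
    Real.exp_le_exp.mpr (neg_le_neg (hw_mono ha hb hab))
  -- finiteness of the measure
  have hfin' : (∫⁻ x : EuclideanSpace ℝ (Fin n), ENNReal.ofReal (Real.exp (-w ‖x‖))) < ⊤ := by
    have h := hfin.measure_univ_lt_top
    rwa [withDensity_apply _ MeasurableSet.univ, Measure.restrict_univ] at h
  have haeN : ∀ᵐ x : EuclideanSpace ℝ (Fin n), x ≠ 0 := by
    have h0 : (volume : Measure (EuclideanSpace ℝ (Fin n))) {0} = 0 := measure_singleton 0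
    rw [ae_iff]
    convert h0 using 2
    ext x; simp
  have hCne0 : (volume : Measure (EuclideanSpace ℝ (Fin n))).toSphere univ ≠ 0 := by
    rw [Measure.toSphere_apply_univ]
    apply mul_ne_zero
    · rw [finrank_euclideanSpace_fin]
      exact Nat.cast_ne_zero.mpr (by omega)
    · exact (Metric.measure_ball_pos _ _ one_pos).ne'
  have hCtop : (volume : Measure (EuclideanSpace ℝ (Fin n))).toSphere univ ≠ ⊤ :=
    measure_ne_top _ _
  -- 1D integrability of r^(n-1) * exp(-w r) on (0,∞)
  have hwtexp_meas : Measurable (fun r : ℝ => ENNReal.ofReal (Real.exp (-(wt r)))) :=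
    (hwt_meas.neg.exp).ennreal_ofReal
  have hXfin : (∫⁻ r in Ioi (0:ℝ),
      ENNReal.ofReal (r^(n-1)) * ENNReal.ofReal (Real.exp (-(wt r)))) ≠ ⊤ := by
    have hpol := lpolar hn hwtexp_meas
    have hcongr : (∫⁻ x : EuclideanSpace ℝ (Fin n), ENNReal.ofReal (Real.exp (-(wt ‖x‖))))
        = ∫⁻ x : EuclideanSpace ℝ (Fin n), ENNReal.ofReal (Real.exp (-w ‖x‖)) := by
      apply lintegral_congr_ae
      filter_upwards [haeN] with x hx
      rw [hwt_eq _ (norm_pos_iff.mpr hx)]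
    intro htop
    rw [hpol, htop, ENNReal.mul_top hCne0] at hcongr
    rw [← hcongr] at hfin'
    exact absurd hfin' (lt_irrefl _)
  have hK0 : IntegrableOn (fun r => r^(n-1) * Real.exp (-w r)) (Ioi (0:ℝ)) := by
    constructor
    · refine ContinuousOn.aestronglyMeasurable ?_ measurableSet_Ioi
      refine (continuous_pow (n-1)).continuousOn.mul ?_
      intro r hr
      exact (Real.continuous_exp.continuousAt.comp (hD r hr).continuousAt.neg).continuousWithinAt
    · rw [hasFiniteIntegral_iff_ofReal]
      · refine lt_of_le_of_lt (le_of_eq (lintegral_congr_ae ?_)) hXfin.lt_top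
        filter_upwards [ae_restrict_mem measurableSet_Ioi] with r hr
        rw [hwt_eq _ hr, ENNReal.ofReal_mul (pow_nonneg (le_of_lt hr) _)]
      · filter_upwards [ae_restrict_mem measurableSet_Ioi] with r hr
        exact mul_nonneg (pow_nonneg (le_of_lt hr) _) (Real.exp_pos _).le
  -- main 1D identity
  obtain ⟨hint2, hval⟩ := oneD hn hD hC hpos hanti hK0
  set B : ℝ := ∫ r in Ioi (0:ℝ), r^(n-1) * Real.exp (-w r) with hB
  -- Integrability of exp(-w ‖x‖) on E
  have hInt1 : Integrable (fun x : EuclideanSpace ℝ (Fin n) => Real.exp (-w ‖x‖)) := by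
    constructor
    · refine AEStronglyMeasurable.congr
        (f := fun x : EuclideanSpace ℝ (Fin n) => Real.exp (-(wt ‖x‖))) ?_ ?_
      · exact ((hwt_meas.comp measurable_norm).neg.exp).aestronglyMeasurable
      · filter_upwards [haeN] with x hx
        rw [hwt_eq _ (norm_pos_iff.mpr hx)]
    · rw [hasFiniteIntegral_iff_ofReal (Eventually.of_forall fun x => (Real.exp_pos _).le)]
      exact hfin'
  -- Integrability of the dominating radial function on E
  have hgg : Integrable (fun x : EuclideanSpace ℝ (Fin n) =>
      deriv w ‖x‖ * ‖x‖ * Real.exp (-w ‖x‖)) := by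
    constructor
    · refine AEStronglyMeasurable.congr (f := fun x : EuclideanSpace ℝ (Fin n) =>
        deriv w ‖x‖ * ‖x‖ * Real.exp (-(wt ‖x‖))) ?_ ?_
      · exact ((((measurable_deriv w).comp measurable_norm).mul measurable_norm).mul
          ((hwt_meas.comp measurable_norm).neg.exp)).aestronglyMeasurable
      · filter_upwards [haeN] with x hx
        rw [hwt_eq _ (norm_pos_iff.mpr hx)]
    · rw [hasFiniteIntegral_iff_ofReal ?_]
      swap
      · filter_upwards [haeN] with x hx
        have hr : 0 < ‖x‖ := norm_pos_iff.mpr hx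
        exact mul_nonneg (mul_nonneg (hpos _ hr) hr.le) (Real.exp_pos _).le
      have hfm : Measurable (fun r : ℝ =>
          ENNReal.ofReal (deriv w r * r * Real.exp (-(wt r)))) :=
        (((measurable_deriv w).mul measurable_id).mul (hwt_meas.neg.exp)).ennreal_ofReal
      have hpol := lpolar hn hfm
      have hstep1 : (∫⁻ x : EuclideanSpace ℝ (Fin n),
          ENNReal.ofReal (deriv w ‖x‖ * ‖x‖ * Real.exp (-w ‖x‖)))
          = ∫⁻ x : EuclideanSpace ℝ (Fin n),
            ENNReal.ofReal (deriv w ‖x‖ * ‖x‖ * Real.exp (-(wt ‖x‖))) := by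
        apply lintegral_congr_ae
        filter_upwards [haeN] with x hx
        rw [hwt_eq _ (norm_pos_iff.mpr hx)]
      rw [hstep1, hpol]
      refine ENNReal.mul_lt_top hCtop.lt_top ?_
      refine lt_of_le_of_lt ?_
        ((hint2.lintegral_lt_top) : (∫⁻ r in Ioi (0:ℝ),
          ENNReal.ofReal (r^n * deriv w r * Real.exp (-w r))) < ⊤)
      apply lintegral_mono_ae
      filter_upwards [ae_restrict_mem measurableSet_Ioi] with r hr
      rw [hwt_eq _ hr, ← ENNReal.ofReal_mul (pow_nonneg (le_of_lt hr) _)]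
      apply ENNReal.ofReal_le_ofReal
      rw [show r^(n-1) * (deriv w r * r * Real.exp (-w r))
          = (r^(n-1) * r) * deriv w r * Real.exp (-w r) from by ring,
        ← pow_succ, Nat.sub_add_cancel hn]
  -- radial identity on E
  have hradial : ∫ x : EuclideanSpace ℝ (Fin n), deriv w ‖x‖ * ‖x‖ * Real.exp (-w ‖x‖)
      = n * ∫ x : EuclideanSpace ℝ (Fin n), Real.exp (-w ‖x‖) := by
    have e1 := integral_fun_norm_addHaar (volume : Measure (EuclideanSpace ℝ (Fin n)))
      (fun r => deriv w r * r * Real.exp (-w r))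
    have e2 := integral_fun_norm_addHaar (volume : Measure (EuclideanSpace ℝ (Fin n)))
      (fun r => Real.exp (-w r))
    rw [finrank_euclideanSpace_fin] at e1 e2
    have hinner1 : ∫ y in Ioi (0:ℝ), y^(n-1) • (deriv w y * y * Real.exp (-w y))
        = ∫ r in Ioi (0:ℝ), r^n * deriv w r * Real.exp (-w r) := by
      apply setIntegral_congr_fun measurableSet_Ioi
      intro r hr
      simp only [smul_eq_mul]
      rw [show r^(n-1) * (deriv w r * r * Real.exp (-w r))
          = (r^(n-1) * r) * deriv w r * Real.exp (-w r) from by ring,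
        ← pow_succ, Nat.sub_add_cancel hn]
    have e1' : ∫ x : EuclideanSpace ℝ (Fin n), deriv w ‖x‖ * ‖x‖ * Real.exp (-w ‖x‖)
        = (n : ℝ) * (volume (Metric.ball (0 : EuclideanSpace ℝ (Fin n)) 1)).toReal
          * ((n : ℝ) * B) := by
      rw [show (∫ x : EuclideanSpace ℝ (Fin n), deriv w ‖x‖ * ‖x‖ * Real.exp (-w ‖x‖))
        = ∫ x : EuclideanSpace ℝ (Fin n),
            (fun r => deriv w r * r * Real.exp (-w r)) ‖x‖ from by
          apply MeasureTheory.integral_congr_ae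
          filter_upwards [] with x
          ring]
      rw [e1, hinner1, hval]
      simp [nsmul_eq_mul, smul_eq_mul, mul_assoc, measureReal_def]
    have e2' : ∫ x : EuclideanSpace ℝ (Fin n), Real.exp (-w ‖x‖)
        = (n : ℝ) * (volume (Metric.ball (0 : EuclideanSpace ℝ (Fin n)) 1)).toReal * B := by
      rw [e2]
      have : ∫ y in Ioi (0:ℝ), y^(n-1) • Real.exp (-w y) = B := by
        simp only [smul_eq_mul, hB]
      rw [this]
      simp [nsmul_eq_mul, smul_eq_mul, mul_assoc, measureReal_def]
    rw [e1', e2']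
    ring
  -- coordinate functions
  set F : Fin n → Fin n → EuclideanSpace ℝ (Fin n) → ℝ :=
    fun i j x => (deriv w ‖x‖ / ‖x‖) * (x i * x j) * Real.exp (-w ‖x‖) with hF
  have habs : ∀ (x : EuclideanSpace ℝ (Fin n)) (i : Fin n), |x i| ≤ ‖x‖ := by
    intro x i
    rw [EuclideanSpace.norm_eq, ← Real.sqrt_sq (abs_nonneg (x i))]
    apply Real.sqrt_le_sqrt
    rw [sq_abs, show (x i)^2 = ‖x i‖^2 from by rw [Real.norm_eq_abs, sq_abs]]
    exact Finset.single_le_sum (f := fun j => ‖x j‖^2) (fun j _ => sq_nonneg _)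
      (Finset.mem_univ i)
  have hFint : ∀ i j : Fin n, Integrable (F i j) := by
    intro i j
    refine hgg.mono' ?_ ?_
    · refine AEStronglyMeasurable.congr (f := fun x : EuclideanSpace ℝ (Fin n) =>
        (deriv w ‖x‖ / ‖x‖) * (x i * x j) * Real.exp (-(wt ‖x‖))) ?_ ?_
      · refine Measurable.aestronglyMeasurable ?_
        exact ((((measurable_deriv w).comp measurable_norm).div measurable_norm).mul
          (((EuclideanSpace.proj i).continuous.measurable).mul
            ((EuclideanSpace.proj j).continuous.measurable))).mul
          ((hwt_meas.comp measurable_norm).neg.exp)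
      · filter_upwards [haeN] with x hx
        rw [hF]; dsimp only
        rw [hwt_eq _ (norm_pos_iff.mpr hx)]
    · filter_upwards [haeN] with x hx
      have hr : 0 < ‖x‖ := norm_pos_iff.mpr hx
      have hd := hpos _ hr
      rw [hF]; dsimp only
      rw [Real.norm_eq_abs, abs_mul, abs_mul, abs_of_nonneg (div_nonneg hd hr.le),
        abs_of_pos (Real.exp_pos _), abs_mul]
      calc (deriv w ‖x‖ / ‖x‖) * (|x i| * |x j|) * Real.exp (-w ‖x‖)
          ≤ (deriv w ‖x‖ / ‖x‖) * (‖x‖ * ‖x‖) * Real.exp (-w ‖x‖) := by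
            apply mul_le_mul_of_nonneg_right ?_ (Real.exp_pos _).le
            apply mul_le_mul_of_nonneg_left ?_ (div_nonneg hd hr.le)
            exact mul_le_mul (habs x i) (habs x j) (abs_nonneg _) (norm_nonneg _)
        _ = deriv w ‖x‖ * ‖x‖ * Real.exp (-w ‖x‖) := by
            field_simp
  -- cross terms vanish
  have hflip : ∀ i j : Fin n, i ≠ j → ∫ x, F i j x = 0 := by
    intro i j hij
    have hcomp := (flipCoord n i).measurePreserving.integral_comp
      ((flipCoord n i).toHomeomorph.measurableEmbedding) (F i j)
    have hneg : ∀ x, F i j (flipCoord n i x) = - F i j x := by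
      intro x
      have hni : flipCoord n i x i = - x i := by rw [flipCoord_apply]; simp
      have hnj : flipCoord n i x j = x j := by
        rw [flipCoord_apply]
        simp [hij.symm]
      have hnn : ‖flipCoord n i x‖ = ‖x‖ := (flipCoord n i).norm_map x
      rw [hF]; dsimp only
      rw [hni, hnj, hnn]; ring
    have h0 : ∫ x, F i j x = - ∫ x, F i j x := by
      calc ∫ x, F i j x = ∫ x, F i j (flipCoord n i x) := hcomp.symm
        _ = ∫ x, - F i j x := by simp only [hneg]
        _ = - ∫ x, F i j x := integral_neg _
    linarith
  -- diagonal terms all equal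
  have hswap : ∀ i : Fin n, ∫ x, F i i x = ∫ x, F i0 i0 x := by
    intro i
    set S := LinearIsometryEquiv.piLpCongrLeft 2 ℝ ℝ (Equiv.swap i i0) with hS
    have hcomp := S.measurePreserving.integral_comp
      (S.toHomeomorph.measurableEmbedding) (F i0 i0)
    have hpt : ∀ x, F i0 i0 (S x) = F i i x := by
      intro x
      have happ : S x i0 = x i := by
        rw [hS, LinearIsometryEquiv.piLpCongrLeft_apply, Equiv.piCongrLeft'_apply,
          Equiv.symm_swap, Equiv.swap_apply_right]
      have hnn : ‖S x‖ = ‖x‖ := S.norm_map x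
      rw [hF]; dsimp only
      rw [happ, hnn]
    calc ∫ x, F i i x = ∫ x, F i0 i0 (S x) := by simp only [hpt]
      _ = ∫ y, F i0 i0 y := hcomp
  -- expansion of the inner product square
  have hexpand : ∀ x : EuclideanSpace ℝ (Fin n),
      (deriv w ‖x‖ / ‖x‖) * ⟪x, θ⟫ ^ 2 * Real.exp (-w ‖x‖)
      = ∑ i, ∑ j, (θ i * θ j) * F i j x := by
    intro x
    have hinner : ⟪x, θ⟫ = ∑ i, x i * θ i := by
      simp [PiLp.inner_apply, RCLike.inner_apply, conj_trivial]
      exact Finset.sum_congr rfl fun i _ => mul_comm _ _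
    rw [hinner, sq, Finset.sum_mul_sum]
    rw [Finset.mul_sum, Finset.sum_mul]
    apply Finset.sum_congr rfl; intro i _
    rw [Finset.mul_sum, Finset.sum_mul]
    apply Finset.sum_congr rfl; intro j _
    rw [hF]; dsimp only
    ring
  have hsum : ∫ x : EuclideanSpace ℝ (Fin n),
      (deriv w ‖x‖ / ‖x‖) * ⟪x, θ⟫ ^ 2 * Real.exp (-w ‖x‖)
      = ∑ i, ∑ j, (θ i * θ j) * ∫ x, F i j x := by
    calc ∫ x : EuclideanSpace ℝ (Fin n),
        (deriv w ‖x‖ / ‖x‖) * ⟪x, θ⟫ ^ 2 * Real.exp (-w ‖x‖)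
        = ∫ x : EuclideanSpace ℝ (Fin n), ∑ i, ∑ j, (θ i * θ j) * F i j x := by
          simp only [hexpand]
      _ = ∑ i, ∫ x : EuclideanSpace ℝ (Fin n), ∑ j, (θ i * θ j) * F i j x :=
          integral_finset_sum _ (fun i _ => integrable_finset_sum _
            (fun j _ => (hFint i j).const_mul _))
      _ = ∑ i, ∑ j, (θ i * θ j) * ∫ x, F i j x := by
          refine Finset.sum_congr rfl fun i _ => ?_
          rw [integral_finset_sum _ (fun j _ => (hFint i j).const_mul _)]
          exact Finset.sum_congr rfl fun j _ => MeasureTheory.integral_const_mul _ _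
  have hdiag : ∀ i : Fin n, ∑ j, (θ i * θ j) * ∫ x, F i j x
      = θ i ^ 2 * ∫ x, F i0 i0 x := by
    intro i
    rw [Finset.sum_eq_single i]
    · rw [hswap i, sq]
    · intro j _ hji
      rw [hflip i j (Ne.symm hji), mul_zero]
    · intro h; exact absurd (Finset.mem_univ i) h
  have hnorm : ∑ i, θ i ^ 2 = ‖θ‖ ^ 2 := by
    rw [EuclideanSpace.norm_eq, Real.sq_sqrt (Finset.sum_nonneg fun i _ => sq_nonneg _)]
    exact Finset.sum_congr rfl fun i _ => by rw [Real.norm_eq_abs, sq_abs]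
  -- sum of diagonal integrals equals the radial integral
  have hdsum : (n : ℝ) * ∫ x, F i0 i0 x
      = ∫ x : EuclideanSpace ℝ (Fin n), deriv w ‖x‖ * ‖x‖ * Real.exp (-w ‖x‖) := by
    have h1 : ∀ x : EuclideanSpace ℝ (Fin n),
        ∑ i, F i i x = deriv w ‖x‖ * ‖x‖ * Real.exp (-w ‖x‖) := by
      intro x
      by_cases hx : x = 0
      · subst hx
        rw [hF]; dsimp only
        simp
      · have hr : 0 < ‖x‖ := norm_pos_iff.mpr hx
        have hsq : ∑ i, x i * x i = ‖x‖^2 := by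
          rw [EuclideanSpace.norm_eq, Real.sq_sqrt (Finset.sum_nonneg fun i _ => sq_nonneg _)]
          exact Finset.sum_congr rfl fun i _ => by
            rw [Real.norm_eq_abs, sq_abs, sq]
        rw [hF]; dsimp only
        calc ∑ i, (deriv w ‖x‖ / ‖x‖) * (x i * x i) * Real.exp (-w ‖x‖)
            = (deriv w ‖x‖ / ‖x‖) * (∑ i, x i * x i) * Real.exp (-w ‖x‖) := by
              rw [Finset.mul_sum, Finset.sum_mul]
          _ = deriv w ‖x‖ * ‖x‖ * Real.exp (-w ‖x‖) := by
              rw [hsq, sq]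
              field_simp
    calc (n : ℝ) * ∫ x, F i0 i0 x = ∑ _i : Fin n, ∫ x, F i0 i0 x := by
          rw [Finset.sum_const, Finset.card_univ, Fintype.card_fin, nsmul_eq_mul]
      _ = ∑ i : Fin n, ∫ x, F i i x :=
          (Finset.sum_congr rfl fun i _ => (hswap i).symm)
      _ = ∫ x : EuclideanSpace ℝ (Fin n), ∑ i, F i i x :=
          (integral_finset_sum _ fun i _ => hFint i i).symm
      _ = ∫ x : EuclideanSpace ℝ (Fin n), deriv w ‖x‖ * ‖x‖ * Real.exp (-w ‖x‖) := by
          simp only [h1]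
  -- conclusion
  rw [hsum]
  have hcollapse : ∑ i, ∑ j, (θ i * θ j) * ∫ x, F i j x
      = (∑ i, θ i ^ 2) * ∫ x, F i0 i0 x := by
    rw [Finset.sum_congr rfl fun i _ => hdiag i, ← Finset.sum_mul]
  rw [hcollapse, hnorm]
  congr 1
  have hn0 : (n : ℝ) ≠ 0 := Nat.cast_ne_zero.mpr (by omega)
  apply mul_left_cancel₀ hn0
  rw [hdsum, hradial]
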